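/- arXiv:1912.03460 — 2 statements merged into one kernel-verified Lean document; each statement's English description precedes it below -/
import Mathlib

section
/- Let f : ℝⁿ → ℝ ∪ {+∞} be a closed (lower semicontinuous), proper, convex function whose effective domain dom f is nonempty and convex. If f is steep — i.e., f is differentiable on the relative interior rint(dom f) and ‖∇f(x_k)‖ → +∞ for every sequence (x_k) in rint(dom f) converging to a point of the relative boundary of dom f — then no point of the relative boundary of dom f belongs to dom ∂f, and dom ∂f = rint(dom f). -/
open Set Filter Topology

noncomputable section

abbrev E (n : ℕ) : Type := EuclideanSpace ℝ (Fin n)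

/-- effective domain of an extended-real-valued function -/
def edom {n : ℕ} (f : E n → EReal) : Set (E n) := {x | f x < ⊤}

/-- proper: never −∞ and not identically +∞ -/
def properE {n : ℕ} (f : E n → EReal) : Prop := (∀ x, f x ≠ ⊥) ∧ ∃ x, f x ≠ ⊤

def convexE {n : ℕ} (f : E n → EReal) : Prop :=
  ∀ x y : E n, ∀ a b : ℝ, 0 ≤ a → 0 ≤ b → a + b = 1 →
    f (a • x + b • y) ≤ (a : EReal) * f x + (b : EReal) * f y

def stronglyConvexE {n : ℕ} (ρ : ℝ) (f : E n → EReal) : Prop :=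
  convexE (fun x => f x - (((ρ / 2) * ‖x‖ ^ 2 : ℝ) : EReal))

def subdiff {n : ℕ} (f : E n → EReal) (x : E n) : Set (E n) :=
  {v | ∀ y : E n, f x + ((inner ℝ v (y - x) : ℝ) : EReal) ≤ f y}

def domSubdiff {n : ℕ} (f : E n → EReal) : Set (E n) := {x | (subdiff f x).Nonempty}

/-- relative boundary -/
def rbd {n : ℕ} (s : Set (E n)) : Set (E n) := closure s \ intrinsicInterior ℝ s

def Steep {n : ℕ} (f : E n → EReal) : Prop :=
  ∃ g : E n → E n,
    (∀ x ∈ intrinsicInterior ℝ (edom f),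
      HasGradientAt (fun y => (f y).toReal) (g x) x) ∧
    ∀ (xs : ℕ → E n) (p : E n),
      (∀ k, xs k ∈ intrinsicInterior ℝ (edom f)) →
      p ∈ rbd (edom f) → Tendsto xs atTop (nhds p) →
      Tendsto (fun k => ‖g (xs k)‖) atTop atTop

def NonSteep {n : ℕ} (f : E n → EReal) : Prop :=
  ∃ g : E n → E n,
    (∀ x ∈ intrinsicInterior ℝ (edom f),
      HasGradientAt (fun y => (f y).toReal) (g x) x) ∧
    ∀ (xs : ℕ → E n) (p : E n),
      (∀ k, xs k ∈ intrinsicInterior ℝ (edom f)) →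
      p ∈ rbd (edom f) → Tendsto xs atTop (nhds p) →
      ∃ M : ℝ, ∀ k, ‖g (xs k)‖ ≤ M

/-- convex conjugate -/
def conjE {n : ℕ} (f : E n → EReal) (z : E n) : EReal :=
  ⨆ x : E n, (((inner ℝ x z : ℝ) : EReal) - f x)

def strictConvexOnE {n : ℕ} (s : Set (E n)) (f : E n → EReal) : Prop :=
  ∀ x ∈ s, ∀ y ∈ s, x ≠ y → ∀ a b : ℝ, 0 < a → 0 < b → a + b = 1 →
    f (a • x + b • y) < (a : EReal) * f x + (b : EReal) * f y

def EssentiallySmoothE {n : ℕ} (f : E n → EReal) : Prop :=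
  ∃ g : E n → E n,
    (∀ x ∈ interior (edom f), HasGradientAt (fun y => (f y).toReal) (g x) x) ∧
    ∀ (xs : ℕ → E n) (p : E n),
      (∀ k, xs k ∈ interior (edom f)) → p ∈ frontier (edom f) →
      Tendsto xs atTop (nhds p) →
      Tendsto (fun k => ‖g (xs k)‖) atTop atTop

def EssentiallyStrictlyConvexE {n : ℕ} (f : E n → EReal) : Prop :=
  ∀ s : Set (E n), s ⊆ domSubdiff f → Convex ℝ s → strictConvexOnE s f

def LegendreE {n : ℕ} (f : E n → EReal) : Prop :=
  EssentiallySmoothE f ∧ EssentiallyStrictlyConvexE f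

def SupercoerciveE {n : ℕ} (f : E n → EReal) : Prop :=
  ∀ M : ℝ, ∃ R : ℝ, ∀ x : E n, R ≤ ‖x‖ → ((M * ‖x‖ : ℝ) : EReal) ≤ f x

section AuxLemmas
variable {n : ℕ}

lemma mem_rint_iff {s : Set (E n)} {x : E n} :
    x ∈ intrinsicInterior ℝ s ↔ x ∈ affineSpan ℝ s ∧
      ∃ ε > 0, ∀ u ∈ (affineSpan ℝ s).direction, ‖u‖ < ε → x + u ∈ s := by
  constructor
  · rintro ⟨y, hy, rfl⟩
    rw [mem_interior_iff_mem_nhds, nhds_induced, Filter.mem_comap] at hy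
    obtain ⟨U, hU, hUs⟩ := hy
    obtain ⟨ε, hε, hball⟩ := Metric.mem_nhds_iff.1 hU
    refine ⟨y.2, ε, hε, fun u hu hnorm => ?_⟩
    have hmem : (y : E n) + u ∈ affineSpan ℝ s := by
      have := AffineSubspace.vadd_mem_of_mem_direction hu y.2
      rwa [vadd_eq_add, add_comm] at this
    have hin : (⟨(y : E n) + u, hmem⟩ : affineSpan ℝ s) ∈ Subtype.val ⁻¹' U := by
      apply hball
      simp only [mem_preimage, Metric.mem_ball, dist_eq_norm]
      simpa using hnorm
    exact hUs hin
  · rintro ⟨hx, ε, hε, h⟩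
    refine ⟨⟨x, hx⟩, ?_, rfl⟩
    rw [mem_interior_iff_mem_nhds, nhds_induced, Filter.mem_comap]
    refine ⟨Metric.ball x ε, Metric.ball_mem_nhds x hε, ?_⟩
    rintro ⟨z, hz⟩ hzball
    have hu : z - x ∈ (affineSpan ℝ s).direction := by
      have := AffineSubspace.vsub_mem_direction hz hx
      rwa [vsub_eq_sub] at this
    have : x + (z - x) ∈ s := h _ hu (by
      simpa [dist_eq_norm] using hzball)
    simpa using this

lemma segment_mem_rint {s : Set (E n)} (hconv : Convex ℝ s) {p y : E n}
    (hp : p ∈ closure s) (hy : y ∈ intrinsicInterior ℝ s) {t : ℝ} (ht0 : 0 < t) (ht1 : t < 1) :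
    p + t • (y - p) ∈ intrinsicInterior ℝ s := by
  obtain ⟨hyspan, ε, hε, hball⟩ := mem_rint_iff.1 hy
  have hspan_closed : IsClosed ((affineSpan ℝ s : AffineSubspace ℝ (E n)) : Set (E n)) :=
    (affineSpan ℝ s).closed_of_finiteDimensional
  have hpspan : p ∈ affineSpan ℝ s :=
    closure_minimal (subset_affineSpan ℝ s) hspan_closed hp
  rw [mem_rint_iff]
  constructor
  · have hmem : t • (y - p) ∈ (affineSpan ℝ s).direction := by
      refine Submodule.smul_mem _ _ ?_
      have := AffineSubspace.vsub_mem_direction hyspan hpspan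
      rwa [vsub_eq_sub] at this
    have := AffineSubspace.vadd_mem_of_mem_direction hmem hpspan
    rwa [vadd_eq_add, add_comm] at this
  · refine ⟨t * ε / 2, by positivity, fun u hu hnorm => ?_⟩
    obtain ⟨q, hq, hqd⟩ := Metric.mem_closure_iff.1 hp (t * ε / 2) (by positivity)
    have hqp : q - p ∈ (affineSpan ℝ s).direction := by
      have := AffineSubspace.vsub_mem_direction (subset_affineSpan ℝ s hq) hpspan
      rwa [vsub_eq_sub] at this
    have hzdir : t⁻¹ • (u - (1 - t) • (q - p)) ∈ (affineSpan ℝ s).direction :=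
      Submodule.smul_mem _ _ (Submodule.sub_mem _ hu (Submodule.smul_mem _ _ hqp))
    have hqpn : ‖q - p‖ < t * ε / 2 := by
      rw [← dist_eq_norm, dist_comm]; exact hqd
    have hznorm : ‖t⁻¹ • (u - (1 - t) • (q - p))‖ < ε := by
      rw [norm_smul, norm_inv, Real.norm_eq_abs, abs_of_pos ht0]
      have h1 : ‖u - (1 - t) • (q - p)‖ ≤ ‖u‖ + (1 - t) * ‖q - p‖ := by
        calc ‖u - (1 - t) • (q - p)‖ ≤ ‖u‖ + ‖(1 - t) • (q - p)‖ := norm_sub_le _ _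
        _ = ‖u‖ + (1 - t) * ‖q - p‖ := by
            rw [norm_smul, Real.norm_eq_abs, abs_of_pos (by linarith)]
      have h2 : ‖u - (1 - t) • (q - p)‖ < t * ε := by
        nlinarith [norm_nonneg (q - p), norm_nonneg u]
      rw [inv_mul_lt_iff₀ ht0]
      linarith
    have hzs : y + t⁻¹ • (u - (1 - t) • (q - p)) ∈ s := hball _ hzdir hznorm
    have hcomb : (1 - t) • q + t • (y + t⁻¹ • (u - (1 - t) • (q - p))) ∈ s :=
      hconv hq hzs (by linarith) (le_of_lt ht0) (by ring)
    have heq : (1 - t) • q + t • (y + t⁻¹ • (u - (1 - t) • (q - p))) = p + t • (y - p) + u := by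
      have ht : t ≠ 0 := ne_of_gt ht0
      match_scalars <;> (field_simp; try ring)
    rwa [heq] at hcomb


lemma edom_ne_top {f : E n → EReal} {x : E n} (h : x ∈ edom f) : f x ≠ ⊤ :=
  ne_of_lt h

lemma subdiff_real {f : E n → EReal} (hbot : ∀ x, f x ≠ ⊥) {p v z : E n}
    (hv : v ∈ subdiff f p) (hp : f p ≠ ⊤) (hz : f z ≠ ⊤) :
    (f p).toReal + (inner ℝ v (z - p) : ℝ) ≤ (f z).toReal := by
  have h := hv z
  rw [← EReal.coe_toReal hp (hbot p), ← EReal.coe_toReal hz (hbot z), ← EReal.coe_add,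
    EReal.coe_le_coe_iff] at h
  exact h

lemma domSubdiff_subset_edom {f : E n → EReal} (hproper : properE f) :
    domSubdiff f ⊆ edom f := by
  rintro p ⟨v, hv⟩
  obtain ⟨x₁, hx₁⟩ := hproper.2
  by_contra hp
  have hptop : f p = ⊤ := by
    simpa [edom, lt_top_iff_ne_top, not_not] using hp
  have h := hv x₁
  rw [hptop, EReal.top_add_of_ne_bot (EReal.coe_ne_bot _)] at h
  exact hx₁ (top_le_iff.1 h)

lemma grad_mem_subdiff {f : E n → EReal} (hconv : convexE f) (hbot : ∀ x, f x ≠ ⊥)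
    {x v : E n} (hx : f x ≠ ⊤) (hg : HasGradientAt (fun y => (f y).toReal) v x) :
    v ∈ subdiff f x := by
  intro y
  by_cases hy : f y = ⊤
  · rw [hy]; exact le_top
  · have key : ∀ t : ℝ, 0 < t → t ≤ 1 →
        ((f (x + t • (y - x))).toReal - (f x).toReal) / t ≤ (f y).toReal - (f x).toReal := by
      intro t ht0 ht1
      have hc := hconv x y (1 - t) t (by linarith) (le_of_lt ht0) (by ring)
      have hpt : (1 - t) • x + t • y = x + t • (y - x) := by module
      rw [hpt, ← EReal.coe_toReal hx (hbot x), ← EReal.coe_toReal hy (hbot y),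
        ← EReal.coe_mul, ← EReal.coe_mul, ← EReal.coe_add] at hc
      have hle : (f (x + t • (y - x))).toReal
          ≤ (1 - t) * (f x).toReal + t * (f y).toReal := by
        have := EReal.toReal_le_toReal hc (hbot _) (EReal.coe_ne_top _)
        rwa [EReal.toReal_coe] at this
      rw [div_le_iff₀ ht0]
      nlinarith
    have hcderiv : HasDerivAt (fun t : ℝ => x + t • (y - x)) (y - x) 0 := by
      have h1 : HasDerivAt (fun t : ℝ => t • (y - x)) ((1 : ℝ) • (y - x)) 0 :=
        (hasDerivAt_id (0 : ℝ)).smul_const (y - x)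
      simpa using h1.const_add x
    have hx0 : x + (0 : ℝ) • (y - x) = x := by simp
    have hfd : HasFDerivAt (fun y => (f y).toReal) (InnerProductSpace.toDual ℝ (E n) v)
        (x + (0 : ℝ) • (y - x)) := by
      rw [hx0]; exact hg.hasFDerivAt
    have hline : HasDerivAt (fun t : ℝ => (f (x + t • (y - x))).toReal)
        ((InnerProductSpace.toDual ℝ (E n) v) (y - x)) 0 :=
      HasFDerivAt.comp_hasDerivAt (f := fun t : ℝ => x + t • (y - x)) 0 hfd hcderiv
    have hline' : HasDerivAt (fun t : ℝ => (f (x + t • (y - x))).toReal)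
        ((inner ℝ v (y - x) : ℝ)) 0 := by
      simpa [InnerProductSpace.toDual_apply_apply] using hline
    have hslope := hasDerivAt_iff_tendsto_slope.1 hline'
    have hslope' : Tendsto (slope (fun t : ℝ => (f (x + t • (y - x))).toReal) 0)
        (𝓝[>] 0) (𝓝 (inner ℝ v (y - x) : ℝ)) :=
      hslope.mono_left (nhdsWithin_mono 0 (fun a ha => ne_of_gt ha))
    have hineq : (inner ℝ v (y - x) : ℝ) ≤ (f y).toReal - (f x).toReal := by
      refine le_of_tendsto hslope' ?_
      filter_upwards [Ioc_mem_nhdsGT_of_mem (Set.left_mem_Ico.2 one_pos)] with t ht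
      rw [slope_def_field]
      simp only [sub_zero, hx0]
      exact key t ht.1 ht.2
    rw [← EReal.coe_toReal hx (hbot x), ← EReal.coe_toReal hy (hbot y), ← EReal.coe_add,
      EReal.coe_le_coe_iff]
    linarith

lemma rint_ball {s : Set (E n)} {x : E n} (hx : x ∈ intrinsicInterior ℝ s) :
    ∃ ε > 0, ∀ z : E n, ‖z - x‖ < ε → z ∈ affineSpan ℝ s → z ∈ intrinsicInterior ℝ s := by
  obtain ⟨hxs, ε, hε, hb⟩ := mem_rint_iff.1 hx
  refine ⟨ε / 2, by positivity, fun z hzn hzs => ?_⟩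
  rw [mem_rint_iff]
  refine ⟨hzs, ε / 2, by positivity, fun u hu hun => ?_⟩
  have hzx : z - x ∈ (affineSpan ℝ s).direction := by
    have := AffineSubspace.vsub_mem_direction hzs hxs
    rwa [vsub_eq_sub] at this
  have hmem : x + ((z - x) + u) ∈ s := hb _ (Submodule.add_mem _ hzx hu)
    (lt_of_le_of_lt (norm_add_le _ _) (by linarith))
  have heq : x + ((z - x) + u) = z + u := by abel
  rwa [heq] at hmem

end AuxLemmas

set_option maxHeartbeats 2000000 in
theorem stmt0 {n : ℕ} (f : E n → EReal)
    (hlsc : LowerSemicontinuous f) (hproper : properE f) (hconv : convexE f)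
    (hdom_ne : (edom f).Nonempty) (hdom_conv : Convex ℝ (edom f))
    (hsteep : Steep f) :
    (∀ p ∈ rbd (edom f), p ∉ domSubdiff f) ∧
      domSubdiff f = intrinsicInterior ℝ (edom f) := by
  obtain ⟨g, hgdiff, hgsteep⟩ := hsteep
  have hbot := hproper.1
  have hrint_ne_top : ∀ x ∈ intrinsicInterior ℝ (edom f), f x ≠ ⊤ := fun x hx =>
    edom_ne_top (intrinsicInterior_subset hx)
  have hgsub : ∀ x ∈ intrinsicInterior ℝ (edom f), g x ∈ subdiff f x := fun x hx =>
    grad_mem_subdiff hconv hbot (hrint_ne_top x hx) (hgdiff x hx)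
  have part1 : ∀ p ∈ rbd (edom f), p ∉ domSubdiff f := by
    rintro p hp hpd
    have hpcl : p ∈ closure (edom f) := hp.1
    have hprint : p ∉ intrinsicInterior ℝ (edom f) := hp.2
    obtain ⟨v, hv⟩ := hpd
    have hpe : f p ≠ ⊤ := edom_ne_top (domSubdiff_subset_edom hproper ⟨v, hv⟩)
    obtain ⟨y, hy⟩ := hdom_ne.intrinsicInterior hdom_conv
    set t : ℕ → ℝ := fun k => ((k : ℝ) + 2)⁻¹ with hts
    have ht0 : ∀ k, 0 < t k := fun k => by rw [hts]; positivity
    have ht1 : ∀ k, t k < 1 := by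
      intro k
      rw [hts]
      have h1 : (1 : ℝ) < (k : ℝ) + 2 := by
        have := Nat.cast_nonneg (α := ℝ) k
        linarith
      simpa using inv_lt_one_of_one_lt₀ h1
    set xs : ℕ → E n := fun k => p + t k • (y - p) with hxsdef
    have hxs : ∀ k, xs k ∈ intrinsicInterior ℝ (edom f) := fun k =>
      segment_mem_rint hdom_conv hpcl hy (ht0 k) (ht1 k)
    have htlim : Tendsto t atTop (𝓝 0) :=
      tendsto_inv_atTop_zero.comp
        (tendsto_atTop_add_const_right atTop 2 tendsto_natCast_atTop_atTop)
    have hxslim : Tendsto xs atTop (𝓝 p) := by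
      have h1 := (htlim.smul_const (y - p)).const_add p
      simpa using h1
    have hblow := hgsteep xs p hxs hp hxslim
    by_cases hspan : affineSpan ℝ (edom f) = ⊤
    · -- full-dimensional case
      obtain ⟨ε, hε, hball⟩ := rint_ball hy
      set r := ε / 2 with hr
      have hr0 : (0 : ℝ) < r := by rw [hr]; positivity
      have hKrint : ∀ z ∈ Metric.closedBall y r, z ∈ intrinsicInterior ℝ (edom f) := by
        intro z hz
        refine hball z ?_ (by rw [hspan]; exact AffineSubspace.mem_top ℝ (E n) z)
        have h1 : dist z y ≤ ε / 2 := Metric.mem_closedBall.1 hz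
        rw [← dist_eq_norm]
        linarith
      have hcont : ContinuousOn (fun z => (f z).toReal) (Metric.closedBall y r) := fun z hz =>
        ((hgdiff z (hKrint z hz)).hasFDerivAt.continuousAt).continuousWithinAt
      obtain ⟨z₀, hz₀, hmax⟩ := (isCompact_closedBall y r).exists_isMaxOn
        ⟨y, Metric.mem_closedBall_self (le_of_lt hr0)⟩ hcont
      set M := (f z₀).toReal with hM
      set c : ℝ := inner ℝ v (y - p) with hc
      set Fp := (f p).toReal with hFp
      have hyK : y ∈ Metric.closedBall y r := Metric.mem_closedBall_self (le_of_lt hr0)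
      have hMlb : Fp + c ≤ M := by
        have h1 : Fp + (inner ℝ v (y - p) : ℝ) ≤ (f y).toReal :=
          subdiff_real hbot hv hpe (hrint_ne_top y hy)
        have h2 : (f y).toReal ≤ M := hmax hyK
        rw [← hc] at h1
        linarith
      have key : ∀ k, r * ‖g (xs k)‖ ≤ M - Fp + 2 * |c| := by
        intro k
        set gk := g (xs k) with hgk_def
        have hxk_ne : f (xs k) ≠ ⊤ := hrint_ne_top _ (hxs k)
        have hgk := hgsub _ (hxs k)
        have hm1 : Fp + (inner ℝ v (xs k - p) : ℝ) ≤ (f (xs k)).toReal :=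
          subdiff_real hbot hv hpe hxk_ne
        have hm2 : (f (xs k)).toReal + (inner ℝ gk (p - xs k) : ℝ) ≤ Fp :=
          subdiff_real hbot hgk hxk_ne hpe
        have hxkp : xs k - p = t k • (y - p) := by
          show (p + t k • (y - p)) - p = t k • (y - p)
          abel
        have hpxk : p - xs k = -(t k • (y - p)) := by
          show p - (p + t k • (y - p)) = -(t k • (y - p))
          abel
        have hiv : (inner ℝ v (xs k - p) : ℝ) = t k * c := by
          rw [hxkp, real_inner_smul_right, hc]
        have hig2 : (inner ℝ gk (p - xs k) : ℝ) = -(t k * (inner ℝ gk (y - p) : ℝ)) := by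
          rw [hpxk, inner_neg_right, real_inner_smul_right]
        have hig : c ≤ (inner ℝ gk (y - p) : ℝ) := by
          rw [hiv] at hm1
          rw [hig2] at hm2
          have htk := ht0 k
          nlinarith
        have hFxk : Fp - |c| ≤ (f (xs k)).toReal := by
          rw [hiv] at hm1
          have htk := ht0 k
          have htk1 := ht1 k
          nlinarith [le_abs_self c, neg_abs_le c, abs_nonneg c]
        by_cases hgz : gk = 0
        · rw [hgz]
          simp only [norm_zero, mul_zero]
          nlinarith [abs_nonneg c, neg_abs_le c]
        · have hgn : (0 : ℝ) < ‖gk‖ := norm_pos_iff.2 hgz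
          set u : E n := ‖gk‖⁻¹ • gk with hu
          have hun : ‖u‖ = 1 := by
            rw [hu, norm_smul, norm_inv, norm_norm, inv_mul_cancel₀ (ne_of_gt hgn)]
          set z : E n := y + r • u with hz
          have hzK : z ∈ Metric.closedBall y r := by
            rw [Metric.mem_closedBall, dist_eq_norm, hz]
            have : y + r • u - y = r • u := by abel
            rw [this, norm_smul, Real.norm_eq_abs, abs_of_pos hr0, hun, mul_one]
          have hz_ne : f z ≠ ⊤ := hrint_ne_top z (hKrint z hzK)
          have hsub : (f (xs k)).toReal + (inner ℝ gk (z - xs k) : ℝ) ≤ (f z).toReal :=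
            subdiff_real hbot hgk hxk_ne hz_ne
          have hzM : (f z).toReal ≤ M := hmax hzK
          have hzx : z - xs k = (1 - t k) • (y - p) + r • u := by
            show (y + r • u) - (p + t k • (y - p)) = (1 - t k) • (y - p) + r • u
            module
          have hgu : (inner ℝ gk u : ℝ) = ‖gk‖ := by
            rw [hu, real_inner_smul_right, real_inner_self_eq_norm_sq]
            field_simp
          have hinner : (inner ℝ gk (z - xs k) : ℝ)
              = (1 - t k) * (inner ℝ gk (y - p) : ℝ) + r * ‖gk‖ := by
            rw [hzx, inner_add_right, real_inner_smul_right, real_inner_smul_right, hgu]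
          have hb1 : -|c| ≤ (1 - t k) * (inner ℝ gk (y - p) : ℝ) := by
            have htk := ht0 k
            have htk1 := ht1 k
            nlinarith [le_abs_self c, neg_abs_le c, abs_nonneg c]
          rw [hinner] at hsub
          linarith
      obtain ⟨k, hk⟩ := (hblow.eventually_gt_atTop ((M - Fp + 2 * |c|) / r)).exists
      have hkey := key k
      rw [div_lt_iff₀ hr0] at hk
      linarith
    · -- lower-dimensional case
      have hne : (affineSpan ℝ (edom f) : Set (E n)).Nonempty :=
        (affineSpan_nonempty ℝ).2 hdom_ne
      have hdir : (affineSpan ℝ (edom f)).direction ≠ ⊤ := fun h =>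
        hspan ((AffineSubspace.direction_eq_top_iff_of_nonempty hne).1 h)
      obtain ⟨w, hw⟩ : ∃ w, w ∉ (affineSpan ℝ (edom f)).direction := by
        by_contra h
        push_neg at h
        exact hdir (Submodule.eq_top_iff'.2 h)
      have hoff : ∀ z : E n, z ∉ affineSpan ℝ (edom f) → (f z).toReal = 0 := by
        intro z hz
        have h1 : z ∉ edom f := fun h => hz (subset_affineSpan ℝ _ h)
        have h2 : f z = ⊤ := by
          simpa [edom, lt_top_iff_ne_top, not_not] using h1
        rw [h2]
        exact EReal.toReal_top
      have hrint0 : ∀ x ∈ intrinsicInterior ℝ (edom f), (f x).toReal = 0 := by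
        intro x hx
        have hcont : ContinuousAt (fun z => (f z).toReal) x :=
          (hgdiff x hx).hasFDerivAt.continuousAt
        have hxspan : x ∈ affineSpan ℝ (edom f) := (mem_rint_iff.1 hx).1
        have hseq : Tendsto (fun k : ℕ => x + t k • w) atTop (𝓝 x) := by
          have h1 := (htlim.smul_const w).const_add x
          simpa using h1
        have hvals : ∀ k : ℕ, (f (x + t k • w)).toReal = 0 := by
          intro k
          apply hoff
          intro hmem
          apply hw
          have h1 : t k • w ∈ (affineSpan ℝ (edom f)).direction := by
            have h2 := AffineSubspace.vsub_mem_direction hmem hxspan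
            have h3 : (x + t k • w) -ᵥ x = t k • w := by
              rw [vsub_eq_sub]; abel
            rwa [h3] at h2
          have h4 := Submodule.smul_mem _ (t k)⁻¹ h1
          rwa [smul_smul, inv_mul_cancel₀ (ne_of_gt (ht0 k)), one_smul] at h4
        have hlim1 : Tendsto (fun k : ℕ => (f (x + t k • w)).toReal) atTop
            (𝓝 ((f x).toReal)) := hcont.tendsto.comp hseq
        have hlim2 : Tendsto (fun k : ℕ => (f (x + t k • w)).toReal) atTop (𝓝 0) := by
          simp only [hvals]
          exact tendsto_const_nhds
        exact tendsto_nhds_unique hlim1 hlim2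
      have hg0 : ∀ x ∈ intrinsicInterior ℝ (edom f), g x = 0 := by
        intro x hx
        obtain ⟨ε, hε, hb⟩ := rint_ball hx
        have hloc : (fun z => (f z).toReal) =ᶠ[𝓝 x] fun _ => (0 : ℝ) := by
          filter_upwards [Metric.ball_mem_nhds x hε] with z hz
          by_cases hzs : z ∈ affineSpan ℝ (edom f)
          · exact hrint0 z (hb z (by rwa [← dist_eq_norm]) hzs)
          · exact hoff z hzs
        have h1 : HasGradientAt (fun z => (f z).toReal) 0 x :=
          (hasGradientAt_const x (0 : ℝ)).congr_of_eventuallyEq hloc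
        exact (hgdiff x hx).unique h1
      obtain ⟨k, hk⟩ := (hblow.eventually_gt_atTop 0).exists
      rw [hg0 _ (hxs k)] at hk
      simp at hk
  refine ⟨part1, ?_⟩
  apply Subset.antisymm
  · intro x hx
    have hxe : x ∈ edom f := domSubdiff_subset_edom hproper hx
    by_contra hxr
    exact part1 x ⟨subset_closure hxe, hxr⟩ hx
  · intro x hx
    exact ⟨g x, hgsub x hx⟩


end
end

section
/- Let ψ : ℝⁿ → ℝ ∪ {+∞} be closed, proper and σ-strongly convex with σ > 0 and dom ψ = Ω nonempty closed convex, let C = ∇ψ*, let U : Ω → ℝⁿ satisfy ⟨U(x) − U(x′), x − x′⟩ ≤ 0 for all x, x′ ∈ Ω (i.e. −U is monotone), let γ > 0, and let z̄ ∈ ℝⁿ satisfy z̄ = U(C(z̄)). Then for every z ∈ ℝⁿ, the Lyapunov function V(z) = ψ*(z) − ψ*(z̄) − ⟨C(z̄), z − z̄⟩ (the Bregman divergence D_{ψ*}(z, z̄)) satisfies the decrease inequality along the discounted mirror descent vector field: ⟨C(z) − C(z̄), γ(U(C(z)) − z)⟩ ≤ −γσ ‖C(z) − C(z̄)‖₂².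 -/
open Set Filter Topology

noncomputable section

lemma normsq_combo {n : ℕ} (a b : E n) (t : ℝ) :
    ‖(1-t)•a + t•b‖^2 = (1-t)*‖a‖^2 + t*‖b‖^2 - t*(1-t)*‖a-b‖^2 := by
  have h1 : ‖(1-t)•a + t•b‖^2 = ‖(1-t)•a‖^2 + 2*(inner ℝ ((1-t)•a) (t•b) : ℝ) + ‖t•b‖^2 :=
    norm_add_sq_real _ _
  have h2 : ‖a - b‖^2 = ‖a‖^2 - 2*(inner ℝ a b : ℝ) + ‖b‖^2 := norm_sub_sq_real a b
  have h3 : (inner ℝ ((1-t)•a) (t•b) : ℝ) = (1-t)*t*(inner ℝ a b : ℝ) := by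
    rw [real_inner_smul_left, real_inner_smul_right]; ring
  have h4 : ‖(1-t)•a‖^2 = (1-t)^2*‖a‖^2 := by
    rw [norm_smul, mul_pow, Real.norm_eq_abs, sq_abs]
  have h5 : ‖t•b‖^2 = t^2*‖b‖^2 := by
    rw [norm_smul, mul_pow, Real.norm_eq_abs, sq_abs]
  rw [h1, h3, h4, h5]; nlinarith [h2]

lemma key_convex {n : ℕ} {σ : ℝ} {ψ : E n → EReal} (hb : ∀ x, ψ x ≠ ⊥)
    (hsc : stronglyConvexE σ ψ) {x y : E n} (hx : ψ x ≠ ⊤) (hy : ψ y ≠ ⊤)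
    {t : ℝ} (ht0 : 0 ≤ t) (ht1 : t ≤ 1) :
    ψ ((1-t)•x + t•y) ≠ ⊤ ∧
    (ψ ((1-t)•x + t•y)).toReal ≤ (1-t)*(ψ x).toReal + t*(ψ y).toReal
      - σ/2*(t*(1-t))*‖x-y‖^2 := by
  set q : E n → ℝ := fun u => (σ/2) * ‖u‖^2 with hq
  have hgx : ψ x - ((q x : ℝ) : EReal) = (((ψ x).toReal - q x : ℝ) : EReal) := by
    rw [← EReal.coe_toReal hx (hb x), ← EReal.coe_sub, EReal.toReal_coe]
  have hgy : ψ y - ((q y : ℝ) : EReal) = (((ψ y).toReal - q y : ℝ) : EReal) := by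
    rw [← EReal.coe_toReal hy (hb y), ← EReal.coe_sub, EReal.toReal_coe]
  have H := hsc x y (1-t) t (by linarith) ht0 (by linarith)
  change _ - ((q _ : ℝ) : EReal) ≤ _ * (_ - ((q x : ℝ) : EReal)) + _ * (_ - ((q y : ℝ) : EReal)) at H
  simp only [hgx, hgy] at H
  set w : E n := (1-t)•x + t•y with hw
  set R : ℝ := (1-t)*((ψ x).toReal - q x) + t*((ψ y).toReal - q y) with hR
  have HR : ψ w - ((q w : ℝ) : EReal) ≤ (R : EReal) := by
    refine H.trans_eq ?_
    rw [hR, EReal.coe_add, EReal.coe_mul, EReal.coe_mul]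
  have hle : ψ w ≤ ((R + q w : ℝ) : EReal) := by
    rw [EReal.coe_add,
      ← EReal.sub_le_iff_le_add (Or.inl (EReal.coe_ne_bot _)) (Or.inl (EReal.coe_ne_top _))]
    exact HR
  have hwt : ψ w ≠ ⊤ := by
    intro h; rw [h, top_le_iff] at hle; exact EReal.coe_ne_top _ hle
  refine ⟨hwt, ?_⟩
  have h2 : (ψ w).toReal ≤ R + q w :=
    EReal.toReal_le_toReal hle (hb w) (EReal.coe_ne_top _) |>.trans_eq (EReal.toReal_coe _)
  have h3 : q w = σ/2*((1-t)*‖x‖^2 + t*‖y‖^2 - t*(1-t)*‖x-y‖^2) := by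
    rw [hq]; simp only [hw, normsq_combo]
  rw [hR] at h2
  simp only [hq] at h2 h3
  rw [h3] at h2
  ring_nf at h2 ⊢
  linarith

lemma minorant {n : ℕ} {σ : ℝ} {ψ : E n → EReal}
    (hlsc : LowerSemicontinuous ψ) (hb : ∀ x, ψ x ≠ ⊥) (hne : ∃ x, ψ x ≠ ⊤)
    (hsc : stronglyConvexE σ ψ) :
    ∃ (L : E n →L[ℝ] ℝ) (c : ℝ), ∀ x, ((L x + c + σ/2*‖x‖^2 : ℝ) : EReal) ≤ ψ x := by
  set q : E n → ℝ := fun u => σ/2 * ‖u‖^2 with hq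
  set epi : Set (E n × ℝ) := {p | ψ p.1 ≤ ((p.2 + q p.1 : ℝ) : EReal)} with hepi
  -- closedness
  have hcl : IsClosed epi := by
    have h1 : IsClosed {p : E n × EReal | ψ p.1 ≤ p.2} := hlsc.isClosed_epigraph
    have h2 : Continuous (fun p : E n × ℝ => ((p.1, ((p.2 + q p.1 : ℝ) : EReal)) : E n × EReal)) := by
      refine continuous_fst.prodMk (continuous_coe_real_ereal.comp ?_)
      exact continuous_snd.add ((continuous_const.mul ((continuous_norm.comp continuous_fst).pow 2)))
    exact h1.preimage h2
  -- convexity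
  have hcv : Convex ℝ epi := by
    rintro p hp p' hp' a b ha hb' hab
    simp only [hepi, Set.mem_setOf_eq] at hp hp'
    have hp1 : ψ p.1 ≠ ⊤ := fun h => by rw [h] at hp; exact EReal.coe_ne_top _ (top_le_iff.mp hp)
    have hp1' : ψ p'.1 ≠ ⊤ := fun h => by rw [h] at hp'; exact EReal.coe_ne_top _ (top_le_iff.mp hp')
    have hr : (ψ p.1).toReal ≤ p.2 + q p.1 :=
      (EReal.toReal_le_toReal hp (hb _) (EReal.coe_ne_top _)).trans_eq (EReal.toReal_coe _)
    have hr' : (ψ p'.1).toReal ≤ p'.2 + q p'.1 :=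
      (EReal.toReal_le_toReal hp' (hb _) (EReal.coe_ne_top _)).trans_eq (EReal.toReal_coe _)
    have ha' : (1 : ℝ) - b = a := by linarith
    have hk := key_convex hb hsc hp1 hp1' hb' (by linarith : b ≤ 1)
    rw [ha'] at hk
    obtain ⟨hkt, hkle⟩ := hk
    have hmem : ψ (a • p.1 + b • p'.1) ≤ ((a*p.2 + b*p'.2 + q (a • p.1 + b • p'.1) : ℝ) : EReal) := by
      rw [← EReal.coe_toReal hkt (hb _), EReal.coe_le_coe_iff]
      have hqc : q (a • p.1 + b • p'.1) = a * q p.1 + b * q p'.1 - σ/2*(b*a)*‖p.1-p'.1‖^2 := by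
        rw [hq]; simp only
        rw [show a • p.1 + b • p'.1 = (1-b) • p.1 + b • p'.1 by rw [ha'], normsq_combo, ha']
        ring
      rw [hqc]
      nlinarith [hkle, mul_le_mul_of_nonneg_left hr ha, mul_le_mul_of_nonneg_left hr' hb']
    simp only [hepi, Set.mem_setOf_eq, Prod.fst_add, Prod.snd_add, Prod.smul_fst,
      Prod.smul_snd, smul_eq_mul]
    exact hmem
  -- the point below the graph
  obtain ⟨x₀, hx₀⟩ := hne
  set r : ℝ := (ψ x₀).toReal with hr0
  have hψx₀ : ψ x₀ = (r : EReal) := (EReal.coe_toReal hx₀ (hb x₀)).symm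
  have hpt : ((x₀, r - q x₀ - 1) : E n × ℝ) ∉ epi := by
    intro h
    rw [hepi] at h
    simp only [Set.mem_setOf_eq, hψx₀] at h
    rw [EReal.coe_le_coe_iff] at h
    linarith
  obtain ⟨f, u, hfu, hux⟩ := geometric_hahn_banach_closed_point hcv hcl hpt
  set s : ℝ := f (0, 1) with hs
  set A : E n →L[ℝ] ℝ := f.comp (ContinuousLinearMap.inl ℝ (E n) ℝ) with hA
  have hft : ∀ (x : E n) (t : ℝ), f (x, t) = A x + t * s := by
    intro x t
    have : ((x, t) : E n × ℝ) = (x, 0) + t • ((0 : E n), (1:ℝ)) := by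
      simp [Prod.ext_iff]
    rw [this, map_add, map_smul, smul_eq_mul, hA]
    simp [ContinuousLinearMap.inl, hs]
  -- membership of graph points
  have hgraph : ∀ x, ψ x ≠ ⊤ → ∀ m : ℝ, 0 ≤ m → ((x, (ψ x).toReal - q x + m) : E n × ℝ) ∈ epi := by
    intro x hx m hm
    rw [hepi]
    simp only [Set.mem_setOf_eq]
    calc ψ x = (((ψ x).toReal : ℝ) : EReal) := (EReal.coe_toReal hx (hb x)).symm
      _ ≤ _ := by rw [EReal.coe_le_coe_iff]; linarith
  have hs0 : s < 0 := by
    rcases lt_trichotomy s 0 with h | h | h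
    · exact h
    · exfalso
      have h1 := hfu _ (hgraph x₀ hx₀ 0 le_rfl)
      rw [hft] at h1
      rw [hft] at hux
      rw [h] at h1 hux
      simp only [mul_zero, add_zero] at h1 hux
      linarith
    · exfalso
      obtain ⟨m, hm⟩ := exists_nat_gt ((u - A x₀ - (r - q x₀)*s)/s)
      have h1 := hfu _ (hgraph x₀ hx₀ m (Nat.cast_nonneg m))
      rw [hft] at h1
      have : (u - A x₀ - (r - q x₀)*s)/s * s < (m:ℝ) * s := by
        exact mul_lt_mul_of_pos_right hm h
      rw [div_mul_cancel₀ _ (ne_of_gt h)] at this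
      nlinarith
  refine ⟨(-s⁻¹) • A, u/s, fun x => ?_⟩
  by_cases hx : ψ x = ⊤
  · rw [hx]; exact le_top
  · have h1 := hfu _ (hgraph x hx 0 le_rfl)
    rw [hft, add_zero] at h1
    rw [← EReal.coe_toReal hx (hb x), EReal.coe_le_coe_iff]
    have hsne : s ≠ 0 := ne_of_lt hs0
    simp only [ContinuousLinearMap.coe_smul', Pi.smul_apply, smul_eq_mul]
    -- A x + ((ψ x).toReal - q x) * s < u, s < 0
    have h2 : ((ψ x).toReal - q x) * s < u - A x := by linarith
    have h3 : (u - A x)/s < (ψ x).toReal - q x := by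
      rw [div_lt_iff_of_neg hs0]; linarith [h2]
    have : u/s - A x/s < (ψ x).toReal - q x := by
      rw [← sub_div]; exact h3
    have hAx : -s⁻¹ * A x = -(A x/s) := by field_simp
    rw [hAx]
    simp only [hq] at this ⊢
    linarith

lemma conj_ne_bot {n : ℕ} {ψ : E n → EReal} (hb : ∀ x, ψ x ≠ ⊥)
    {x₀ : E n} (hx₀ : ψ x₀ ≠ ⊤) (z : E n) : conjE ψ z ≠ ⊥ := by
  intro h
  have h1 : (((inner ℝ x₀ z : ℝ) : EReal) - ψ x₀) ≤ conjE ψ z :=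
    le_iSup (fun x => (((inner ℝ x z : ℝ) : EReal) - ψ x)) x₀
  rw [h, le_bot_iff, ← EReal.coe_toReal hx₀ (hb x₀), ← EReal.coe_sub] at h1
  exact EReal.coe_ne_bot _ h1

lemma conj_ne_top {n : ℕ} {σ : ℝ} {ψ : E n → EReal} (hσ : 0 < σ)
    {L : E n →L[ℝ] ℝ} {c : ℝ} (hL : ∀ x, ((L x + c + σ/2*‖x‖^2 : ℝ) : EReal) ≤ ψ x)
    (z : E n) : conjE ψ z ≤ (((‖z‖ + ‖L‖)^2/(2*σ) - c : ℝ) : EReal) := by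
  refine iSup_le fun x => ?_
  have h1 : ((inner ℝ x z : ℝ) : EReal) - ψ x ≤
      ((inner ℝ x z : ℝ) : EReal) - ((L x + c + σ/2*‖x‖^2 : ℝ) : EReal) :=
    EReal.sub_le_sub le_rfl (hL x)
  rw [← EReal.coe_sub] at h1
  refine h1.trans ?_
  rw [EReal.coe_le_coe_iff]
  have h2 : (inner ℝ x z : ℝ) ≤ ‖x‖ * ‖z‖ := real_inner_le_norm x z
  have h3 : -(L x) ≤ ‖L‖ * ‖x‖ := by
    have := L.le_opNorm x
    rw [Real.norm_eq_abs] at this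
    cases abs_le.mp this; linarith
  have h4 : (0:ℝ) ≤ ‖x‖ := norm_nonneg x
  have hkey : (‖z‖ + ‖L‖) * ‖x‖ - σ/2*‖x‖^2 ≤ (‖z‖ + ‖L‖)^2/(2*σ) := by
    rw [le_div_iff₀ (by positivity : (0:ℝ) < 2*σ)]
    nlinarith [sq_nonneg (σ*‖x‖ - (‖z‖ + ‖L‖))]
  nlinarith [norm_nonneg z, norm_nonneg L]

lemma conj_attained {n : ℕ} {σ : ℝ} {ψ : E n → EReal} (hσ : 0 < σ)
    (hlsc : LowerSemicontinuous ψ) (hb : ∀ x, ψ x ≠ ⊥)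
    (hsc : stronglyConvexE σ ψ) (z : E n) {r : ℝ} (hconj : conjE ψ z = (r : EReal)) :
    ∃ xm : E n, ψ xm ≠ ⊤ ∧ (inner ℝ xm z : ℝ) - (ψ xm).toReal = r := by
  have hubR : ∀ x, ψ x ≠ ⊤ → (inner ℝ x z : ℝ) - (ψ x).toReal ≤ r := by
    intro x hx
    have h1 : (((inner ℝ x z : ℝ) : EReal) - ψ x) ≤ conjE ψ z :=
      le_iSup (fun x => (((inner ℝ x z : ℝ) : EReal) - ψ x)) x
    rw [hconj, ← EReal.coe_toReal hx (hb x), ← EReal.coe_sub, EReal.coe_le_coe_iff] at h1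
    exact h1
  have hseq : ∀ k : ℕ, ∃ x, ψ x ≠ ⊤ ∧ r - 1/(k+1) < (inner ℝ x z : ℝ) - (ψ x).toReal := by
    intro k
    have hlt : ((r - 1/((k:ℝ)+1) : ℝ) : EReal) < conjE ψ z := by
      rw [hconj, EReal.coe_lt_coe_iff]
      have : (0:ℝ) < 1/((k:ℝ)+1) := by positivity
      linarith
    rw [conjE, lt_iSup_iff] at hlt
    obtain ⟨x, hx⟩ := hlt
    have hxt : ψ x ≠ ⊤ := by
      intro h; rw [h, EReal.sub_top] at hx; exact not_lt_bot hx
    refine ⟨x, hxt, ?_⟩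
    rw [← EReal.coe_toReal hxt (hb x), ← EReal.coe_sub, EReal.coe_lt_coe_iff] at hx
    exact hx
  choose xs hxs1 hxs2 using hseq
  have key : ∀ j k : ℕ, ‖xs j - xs k‖^2 ≤ 4/σ * (1/((j:ℝ)+1) + 1/((k:ℝ)+1)) := by
    intro j k
    obtain ⟨hwt, hwle⟩ := key_convex hb hsc (hxs1 j) (hxs1 k)
      (t := 1/2) (by norm_num) (by norm_num)
    set w := (1-(1/2:ℝ)) • xs j + (1/2 : ℝ) • xs k with hw
    have hinw : (inner ℝ w z : ℝ) = (1-1/2)*(inner ℝ (xs j) z : ℝ) + 1/2*(inner ℝ (xs k) z : ℝ) := by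
      rw [hw, inner_add_left, real_inner_smul_left, real_inner_smul_left]
    have hub := hubR w hwt
    have h2j := hxs2 j
    have h2k := hxs2 k
    rw [div_mul_eq_mul_div, le_div_iff₀ hσ]
    linarith [hwle, hub, hinw, h2j, h2k]
  have hcauchy : CauchySeq xs := by
    rw [Metric.cauchySeq_iff]
    intro ε hε
    obtain ⟨N, hN⟩ := exists_nat_gt ((8/σ)/ε^2)
    refine ⟨N, fun j hj k hk => ?_⟩
    have h1 : (1:ℝ)/((j:ℝ)+1) ≤ 1/((N:ℝ)+1) := by
      apply one_div_le_one_div_of_le (by positivity)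
      have : (N:ℝ) ≤ (j:ℝ) := Nat.cast_le.mpr hj
      linarith
    have h2 : (1:ℝ)/((k:ℝ)+1) ≤ 1/((N:ℝ)+1) := by
      apply one_div_le_one_div_of_le (by positivity)
      have : (N:ℝ) ≤ (k:ℝ) := Nat.cast_le.mpr hk
      linarith
    have h3 := key j k
    rw [dist_eq_norm]
    have hNpos : (0:ℝ) < (N:ℝ)+1 := by positivity
    have h4 : (8/σ)/ε^2 < (N:ℝ) := hN
    have h5 : ‖xs j - xs k‖^2 < ε^2 := by
      have h6 : 4/σ * (1/((j:ℝ)+1) + 1/((k:ℝ)+1)) ≤ (8/σ) * (1/((N:ℝ)+1)) := by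
        rw [show (8:ℝ)/σ * (1/((N:ℝ)+1)) = 4/σ*(1/((N:ℝ)+1) + 1/((N:ℝ)+1)) by ring]
        have h7 : (0:ℝ) ≤ 4/σ := by positivity
        exact mul_le_mul_of_nonneg_left (add_le_add h1 h2) h7
      have h8 : (8/σ) * (1/((N:ℝ)+1)) < ε^2 := by
        rw [div_lt_iff₀ (by positivity : (0:ℝ) < ε^2)] at h4
        have h9 : (0:ℝ) < 8/σ := by positivity
        rw [mul_one_div, div_lt_iff₀ hNpos]
        nlinarith
      linarith
    nlinarith [norm_nonneg (xs j - xs k)]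
  obtain ⟨xm, hlim⟩ := cauchySeq_tendsto_of_complete hcauchy
  have hup : ψ xm ≤ (((inner ℝ xm z : ℝ) - r : ℝ) : EReal) := by
    by_contra hcon
    push_neg at hcon
    obtain ⟨m, hm1, hm2⟩ := EReal.exists_between_coe_real hcon
    have hev2 : ∀ᶠ k in atTop, ((m:ℝ) : EReal) < ψ (xs k) := hlim.eventually (hlsc xm m hm2)
    have hinner : Tendsto (fun k => (inner ℝ (xs k) z : ℝ)) atTop (nhds (inner ℝ xm z : ℝ)) := by
      have hc : Continuous fun y : E n => (inner ℝ y z : ℝ) := continuous_id.inner continuous_const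
      exact (hc.continuousAt).tendsto.comp hlim
    have hsum : Tendsto (fun k : ℕ => (inner ℝ (xs k) z : ℝ) - r + 1/((k:ℝ)+1)) atTop
        (nhds ((inner ℝ xm z : ℝ) - r + 0)) :=
      (hinner.sub tendsto_const_nhds).add tendsto_one_div_add_atTop_nhds_zero_nat
    rw [add_zero] at hsum
    have hm1' : (inner ℝ xm z : ℝ) - r < m := EReal.coe_lt_coe_iff.mp hm1
    have hlt := hsum.eventually_lt_const hm1'
    obtain ⟨k, hk1, hk2⟩ := (hev2.and hlt).exists
    rw [← EReal.coe_toReal (hxs1 k) (hb (xs k)), EReal.coe_lt_coe_iff] at hk1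
    have := hxs2 k
    linarith
  have hxmt : ψ xm ≠ ⊤ := by
    intro h; rw [h, top_le_iff] at hup; exact EReal.coe_ne_top _ hup
  refine ⟨xm, hxmt, le_antisymm (hubR xm hxmt) ?_⟩
  have := EReal.toReal_le_toReal hup (hb xm) (EReal.coe_ne_top _)
  rw [EReal.toReal_coe] at this
  linarith

lemma strong_subgrad {n : ℕ} {σ : ℝ} {ψ : E n → EReal} (hσ : 0 < σ)
    (hb : ∀ x, ψ x ≠ ⊥) (hsc : stronglyConvexE σ ψ) {z xm : E n} (hxm : ψ xm ≠ ⊤)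
    (hub : ∀ x, ψ x ≠ ⊤ →
      (inner ℝ x z : ℝ) - (ψ x).toReal ≤ (inner ℝ xm z : ℝ) - (ψ xm).toReal) :
    ∀ y, ψ y ≠ ⊤ → (ψ xm).toReal + (inner ℝ (y - xm) z : ℝ) + σ/2*‖y - xm‖^2
      ≤ (ψ y).toReal := by
  intro y hy
  set pm := (ψ xm).toReal with hpm
  set py := (ψ y).toReal with hpy
  set I : ℝ := (inner ℝ (y - xm) z : ℝ) with hI
  set D : ℝ := ‖xm - y‖^2 with hD
  have hDnn : (0:ℝ) ≤ D := by rw [hD]; positivity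
  have hDrw : ‖y - xm‖^2 = D := by rw [hD, norm_sub_rev]
  rw [hDrw]
  by_contra hcon
  push_neg at hcon
  set δ : ℝ := pm + I + σ/2*D - py with hδ
  have hδpos : 0 < δ := by rw [hδ]; linarith
  set t : ℝ := min (1/2) (δ/(σ*(D+1))) with ht
  have ht0 : 0 < t := lt_min (by norm_num) (div_pos hδpos (by positivity))
  have ht1 : t ≤ 1 := (min_le_left _ _).trans (by norm_num)
  obtain ⟨hwt, hwle⟩ := key_convex hb hsc hxm hy ht0.le ht1
  have hm := hub _ hwt
  have hwin : (inner ℝ ((1-t)•xm + t•y) z : ℝ)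
      = (1-t)*(inner ℝ xm z : ℝ) + t*(inner ℝ y z : ℝ) := by
    rw [inner_add_left, real_inner_smul_left, real_inner_smul_left]
  have hIrw : I = (inner ℝ y z : ℝ) - (inner ℝ xm z : ℝ) := by
    rw [hI, inner_sub_left]
  rw [hwin] at hm
  -- from hm : (1-t)⟪xm,z⟫ + t⟪y,z⟫ - ψw ≤ ⟪xm,z⟫ - pm
  -- and hwle : ψw ≤ (1-t)pm + t py - σ/2 t(1-t) D
  have hstep : pm + I + σ/2*(1-t)*D - py ≤ 0 := by
    have h2 : t * (pm + I + σ/2*(1-t)*D - py) ≤ t * 0 := by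
      rw [mul_zero]
      rw [← hD, ← hpm, ← hpy] at hwle
      have hIt : t*I = t*(inner ℝ y z : ℝ) - t*(inner ℝ xm z : ℝ) := by rw [hIrw]; ring
      linarith [hm, hwle, hIt]
    exact le_of_mul_le_mul_left (by linarith [h2]) ht0
  have ht2 : t ≤ δ/(σ*(D+1)) := min_le_right _ _
  have h3 : (0:ℝ) < σ*(D+1) := by positivity
  have h4 : t*(σ*(D+1)) ≤ δ := (le_div_iff₀ h3).mp ht2
  have h5 : 0 < σ*t := mul_pos hσ ht0
  have h6 : 0 ≤ σ*t*D := mul_nonneg h5.le hDnn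
  have h7 : δ ≤ σ/2*t*D := by linarith [hstep]
  have h8 : t*(σ*(D+1)) = σ*t*D + σ*t := by ring
  clear_value pm py I D δ t
  linarith [h4, h5, h6, h7, h8]

lemma grad_eq_max {n : ℕ} {φ : E n → ℝ} {z xm g : E n}
    (hgrad : HasGradientAt φ g z) (pm : ℝ)
    (hFY : ∀ w, (inner ℝ xm w : ℝ) - pm ≤ φ w) (heq : φ z = (inner ℝ xm z : ℝ) - pm) :
    g = xm := by
  have h1 : HasFDerivAt φ (InnerProductSpace.toDual ℝ (E n) g) z := hasGradientAt_iff_hasFDerivAt.mp hgrad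
  have h3 : HasFDerivAt (fun w : E n => (inner ℝ xm w : ℝ)) (InnerProductSpace.toDual ℝ (E n) xm) z := by
    have h := (InnerProductSpace.toDual ℝ (E n) xm).hasFDerivAt (x := z)
    exact h
  have h2 : HasFDerivAt (fun w => φ w - (inner ℝ xm w : ℝ))
      (InnerProductSpace.toDual ℝ (E n) g - InnerProductSpace.toDual ℝ (E n) xm) z := h1.sub h3
  have hmin : IsLocalMin (fun w => φ w - (inner ℝ xm w : ℝ)) z := by
    apply Filter.Eventually.of_forall
    intro w
    have := hFY w
    simp only [heq]
    linarith
  have h4 := hmin.hasFDerivAt_eq_zero h2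
  have h5 : InnerProductSpace.toDual ℝ (E n) (g - xm) = 0 := by rw [map_sub]; exact h4
  have h6 : g - xm = 0 := by
    have := (InnerProductSpace.toDual ℝ (E n)).injective (h5.trans (map_zero _).symm)
    exact this
  rw [sub_eq_zero] at h6
  exact h6


theorem stmt16 {n : ℕ} (Ω : Set (E n)) (hΩne : Ω.Nonempty) (hΩcl : IsClosed Ω)
    (hΩconv : Convex ℝ Ω)
    (ψ : E n → EReal) (hlsc : LowerSemicontinuous ψ) (hproper : properE ψ)
    (σ : ℝ) (hσ : 0 < σ) (hsc : stronglyConvexE σ ψ) (hdom : edom ψ = Ω)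
    (C : E n → E n) (hC : ∀ z, HasGradientAt (fun w => (conjE ψ w).toReal) (C z) z)
    (U : E n → E n)
    (hU : ∀ x ∈ Ω, ∀ x' ∈ Ω, (inner ℝ (U x - U x') (x - x') : ℝ) ≤ 0)
    (γ : ℝ) (hγ : 0 < γ)
    (zb : E n) (hzb : zb = U (C zb)) :
    ∀ z : E n, (inner ℝ (C z - C zb) (γ • (U (C z) - z)) : ℝ) ≤ -(γ * σ) * ‖C z - C zb‖ ^ 2 := by
  intro z
  obtain ⟨hb, x₀, hx₀⟩ := hproper
  obtain ⟨L, c, hL⟩ := minorant hlsc hb ⟨x₀, hx₀⟩ hsc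
  have hfin : ∀ w : E n, ∃ r : ℝ, conjE ψ w = (r : EReal) := by
    intro w
    have h1 := conj_ne_bot hb hx₀ w
    have h2 : conjE ψ w ≠ ⊤ := by
      intro h
      have h3 := conj_ne_top hσ hL w
      rw [h, top_le_iff] at h3
      exact EReal.coe_ne_top _ h3
    exact ⟨(conjE ψ w).toReal, (EReal.coe_toReal h2 h1).symm⟩
  have hattain : ∀ w : E n, ∃ xm, ψ xm ≠ ⊤ ∧
      (inner ℝ xm w : ℝ) - (ψ xm).toReal = (conjE ψ w).toReal ∧ C w = xm := by
    intro w
    obtain ⟨r, hr⟩ := hfin w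
    obtain ⟨xm, hxm, heq⟩ := conj_attained hσ hlsc hb hsc w hr
    have hrt : (conjE ψ w).toReal = r := by rw [hr]; exact EReal.toReal_coe r
    have hFY : ∀ v, (inner ℝ xm v : ℝ) - (ψ xm).toReal ≤ (conjE ψ v).toReal := by
      intro v
      have h1 : (((inner ℝ xm v : ℝ) : EReal) - ψ xm) ≤ conjE ψ v :=
        le_iSup (fun x => (((inner ℝ x v : ℝ) : EReal) - ψ x)) xm
      obtain ⟨rv, hrv⟩ := hfin v
      rw [hrv, ← EReal.coe_toReal hxm (hb xm), ← EReal.coe_sub, EReal.coe_le_coe_iff] at h1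
      rw [hrv, EReal.toReal_coe]
      exact h1
    refine ⟨xm, hxm, by rw [hrt]; exact heq, ?_⟩
    exact grad_eq_max (hC w) _ hFY (by rw [hrt]; exact heq.symm)
  obtain ⟨x1, hx1t, hx1eq, hx1C⟩ := hattain z
  obtain ⟨x2, hx2t, hx2eq, hx2C⟩ := hattain zb
  have hub1 : ∀ x, ψ x ≠ ⊤ →
      (inner ℝ x z : ℝ) - (ψ x).toReal ≤ (inner ℝ x1 z : ℝ) - (ψ x1).toReal := by
    intro x hx
    have h1 : (((inner ℝ x z : ℝ) : EReal) - ψ x) ≤ conjE ψ z :=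
      le_iSup (fun x => (((inner ℝ x z : ℝ) : EReal) - ψ x)) x
    obtain ⟨rv, hrv⟩ := hfin z
    rw [hrv, ← EReal.coe_toReal hx (hb x), ← EReal.coe_sub, EReal.coe_le_coe_iff] at h1
    rw [hx1eq, hrv, EReal.toReal_coe]
    exact h1
  have hub2 : ∀ x, ψ x ≠ ⊤ →
      (inner ℝ x zb : ℝ) - (ψ x).toReal ≤ (inner ℝ x2 zb : ℝ) - (ψ x2).toReal := by
    intro x hx
    have h1 : (((inner ℝ x zb : ℝ) : EReal) - ψ x) ≤ conjE ψ zb :=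
      le_iSup (fun x => (((inner ℝ x zb : ℝ) : EReal) - ψ x)) x
    obtain ⟨rv, hrv⟩ := hfin zb
    rw [hrv, ← EReal.coe_toReal hx (hb x), ← EReal.coe_sub, EReal.coe_le_coe_iff] at h1
    rw [hx2eq, hrv, EReal.toReal_coe]
    exact h1
  have hs1 := strong_subgrad hσ hb hsc hx1t hub1 x2 hx2t
  have hs2 := strong_subgrad hσ hb hsc hx2t hub2 x1 hx1t
  have hΩ1 : x1 ∈ Ω := by
    rw [← hdom]; exact lt_top_iff_ne_top.mpr hx1t
  have hΩ2 : x2 ∈ Ω := by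
    rw [← hdom]; exact lt_top_iff_ne_top.mpr hx2t
  have hUmono := hU x1 hΩ1 x2 hΩ2
  rw [hx2C] at hzb
  rw [hx1C, hx2C]
  -- key real inequality
  have hnr : ‖x2 - x1‖^2 = ‖x1 - x2‖^2 := by rw [norm_sub_rev]
  have K : (inner ℝ (x1 - x2) (U x1 - z) : ℝ) ≤ -σ * ‖x1 - x2‖^2 := by
    have e1 : (inner ℝ (x1 - x2) (U x1 - z) : ℝ)
        = (inner ℝ x1 (U x1) : ℝ) - (inner ℝ x1 z : ℝ)
          - (inner ℝ x2 (U x1) : ℝ) + (inner ℝ x2 z : ℝ) := by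
      simp only [inner_sub_left, inner_sub_right]; ring
    have e2 : (inner ℝ (U x1 - U x2) (x1 - x2) : ℝ)
        = (inner ℝ (U x1) x1 : ℝ) - (inner ℝ (U x1) x2 : ℝ)
          - (inner ℝ (U x2) x1 : ℝ) + (inner ℝ (U x2) x2 : ℝ) := by
      simp only [inner_sub_left, inner_sub_right]; ring
    have e3 : (inner ℝ (x2 - x1) z : ℝ) = (inner ℝ x2 z : ℝ) - (inner ℝ x1 z : ℝ) := by
      rw [inner_sub_left]
    have e4 : (inner ℝ (x1 - x2) zb : ℝ) = (inner ℝ x1 zb : ℝ) - (inner ℝ x2 zb : ℝ) := by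
      rw [inner_sub_left]
    rw [e2] at hUmono
    rw [e3, hnr] at hs1
    rw [e4] at hs2
    rw [e1]
    have c1 := real_inner_comm (U x1) x1
    have c2 := real_inner_comm (U x1) x2
    have c3 := real_inner_comm (U x2) x1
    have c4 := real_inner_comm (U x2) x2
    -- U x2 = zb
    rw [← hzb] at hUmono c3 c4
    linarith [hs1, hs2, hUmono, c1, c2, c3, c4]
  calc (inner ℝ (x1 - x2) (γ • (U x1 - z)) : ℝ)
      = γ * (inner ℝ (x1 - x2) (U x1 - z) : ℝ) := real_inner_smul_right _ _ _
    _ ≤ γ * (-σ * ‖x1 - x2‖^2) := mul_le_mul_of_nonneg_left K hγ.le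
    _ = -(γ * σ) * ‖x1 - x2‖^2 := by ring

end
end
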